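/- arXiv:2605.15021 — 2 statements merged into one kernel-verified Lean document; each statement's English description precedes it below -/
import Mathlib

section
/- Let n, d_u, d_v, t be real numbers with 2n/3 ≤ d_u ≤ d_v ≤ n, d_u + d_v - n ≤ t, and (d_u - t ≤ n - d_v and d_v - t ≤ n - d_u and t ≤ d_u). Then (d_u - t)·(d_v - t)·t ≤ (n - d_u)·(n - d_v)·(d_u + d_v - n). -/
lemma aux_ineq (a b s x : ℝ) (hx0 : 0 ≤ x) (hxb : x ≤ b) (hba : b ≤ a) (has : a ≤ s) :
    (b - x) * (a - x) * (s + x) ≤ a * b * s := by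
  have hb0 : 0 ≤ b := hx0.trans hxb
  have ha0 : 0 ≤ a := hb0.trans hba
  rcases le_or_gt (x + s) (a + b) with h | h
  · nlinarith [mul_nonneg hx0 (mul_nonneg ha0 (by linarith : (0:ℝ) ≤ s - b)),
      mul_nonneg hx0 (mul_nonneg hb0 (ha0.trans has)),
      mul_nonneg (mul_nonneg hx0 hx0) (by linarith : (0:ℝ) ≤ a + b - s - x)]
  · nlinarith [mul_nonneg hx0 (mul_nonneg ha0 (ha0.trans has)),
      mul_nonneg hx0 (mul_nonneg (by linarith : (0:ℝ) ≤ b - x) (by linarith : (0:ℝ) ≤ x + s - a - b)),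
      mul_nonneg hx0 (mul_nonneg hb0 (by linarith : (0:ℝ) ≤ b - x))]

theorem case_i_ineq (n du dv t : ℝ) (h1 : 2 * n / 3 ≤ du) (h2 : du ≤ dv) (h3 : dv ≤ n)
    (h4 : du + dv - n ≤ t) (h5 : du - t ≤ n - dv) (h6 : dv - t ≤ n - du) (h7 : t ≤ du) :
    (du - t) * (dv - t) * t ≤ (n - du) * (n - dv) * (du + dv - n) := by
  have := aux_ineq (n - du) (n - dv) (du + dv - n) (t - (du + dv - n))
    (by linarith) (by linarith) (by linarith) (by linarith)
  calc (du - t) * (dv - t) * t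
      = ((n - dv) - (t - (du + dv - n))) * ((n - du) - (t - (du + dv - n)))
        * ((du + dv - n) + (t - (du + dv - n))) := by ring
    _ ≤ _ := this
end

section
/- Let n, k be real numbers with k ≥ 3, n ≥ 0, and let d_u, d_v, t be real numbers with 0 ≤ t ≤ d_u ≤ d_v ≤ n, d_u ≤ 2n/3, d_u - t ≤ n - d_v, and d_v - t ≤ n - d_u. Then (d_u - t)(d_v - t)·t ≤ ((k-3)/k)·n·(n - d_u)(n - d_v) + n³/k³. -/
theorem case_ii_ineq (n k du dv t : ℝ) (hk : 3 ≤ k) (hn : 0 ≤ n)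
    (ht0 : 0 ≤ t) (htu : t ≤ du) (huv : du ≤ dv) (hvn : dv ≤ n)
    (hu23 : du ≤ 2 * n / 3) (h1 : du - t ≤ n - dv) (h2 : dv - t ≤ n - du) :
    (du - t) * (dv - t) * t ≤
      ((k - 3) / k) * n * (n - du) * (n - dv) + n ^ 3 / k ^ 3 := by
  have hk0 : (0:ℝ) < k := by linarith
  have ha : 0 ≤ du - t := by linarith
  have hb : 0 ≤ dv - t := by linarith
  have hnd : 0 ≤ n - du := by linarith
  have hne : 0 ≤ n - dv := by linarith
  have hab : (du - t) * (dv - t) ≤ (n - du) * (n - dv) := by nlinarith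
  have habn : 0 ≤ (du - t) * (dv - t) := mul_nonneg ha hb
  have hkk : 0 ≤ (k - 3) / k := div_nonneg (by linarith) (le_of_lt hk0)
  have hnk : 0 ≤ n ^ 3 / k ^ 3 := by positivity
  have hfrac : (1 - 3 / k) * n = (k - 3) / k * n := by field_simp
  rcases le_or_gt t ((1 - 3 / k) * n) with h | h
  · have h3 : (du - t) * (dv - t) * t ≤ ((k - 3) / k) * n * ((n - du) * (n - dv)) := by
      calc (du - t) * (dv - t) * t ≤ (n - du) * (n - dv) * t :=
            mul_le_mul_of_nonneg_right hab ht0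
        _ ≤ (n - du) * (n - dv) * ((k - 3) / k * n) := by
            apply mul_le_mul_of_nonneg_left _ (mul_nonneg hnd hne)
            linarith [hfrac]
        _ = ((k - 3) / k) * n * ((n - du) * (n - dv)) := by ring
    nlinarith [h3]
  · set x : ℝ := (du - t) + (dv - t) with hx
    set c : ℝ := 3 * n / k with hc
    have hc0 : 0 ≤ c := by positivity
    have hx0 : 0 ≤ x := by positivity
    have key : x ^ 2 * (c - x) ≤ 4 * c ^ 3 / 27 := by
      nlinarith [mul_nonneg (by linarith : (0:ℝ) ≤ x + c / 3) (sq_nonneg (x - 2 * c / 3))]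
    have hcx : t - (1 - 3 / k) * n ≤ c - x := by
      have : (du - t) + (dv - t) + t ≤ n := by linarith
      have hck : c = 3 * n / k := hc
      have : t - n ≤ -x := by simp [hx]; linarith
      have h3k : (1 - 3/k) * n = n - 3 * n / k := by ring
      linarith [this, h3k]
    have hQ : (du - t) * (dv - t) * (t - (1 - 3 / k) * n) ≤ n ^ 3 / k ^ 3 := by
      have hab4 : (du - t) * (dv - t) ≤ x ^ 2 / 4 := by nlinarith [sq_nonneg ((du - t) - (dv - t))]
      have hcube : c ^ 3 / 27 = n ^ 3 / k ^ 3 := by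
        rw [hc]; field_simp; ring
      rcases le_or_gt (c - x) 0 with hcx0 | hcx0
      · have : (du - t) * (dv - t) * (t - (1 - 3/k) * n) ≤ 0 := by
          apply mul_nonpos_of_nonneg_of_nonpos habn
          linarith
        linarith
      · calc (du - t) * (dv - t) * (t - (1 - 3/k) * n)
            ≤ (du - t) * (dv - t) * (c - x) := mul_le_mul_of_nonneg_left hcx habn
          _ ≤ x ^ 2 / 4 * (c - x) := mul_le_mul_of_nonneg_right hab4 (le_of_lt hcx0)
          _ = x ^ 2 * (c - x) / 4 := by ring
          _ ≤ c ^ 3 / 27 := by linarith [key]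
          _ = n ^ 3 / k ^ 3 := hcube
    have hfirst : (du - t) * (dv - t) * ((1 - 3 / k) * n) ≤ ((k - 3) / k) * n * (n - du) * (n - dv) := by
      rw [hfrac]
      calc (du - t) * (dv - t) * ((k - 3) / k * n)
          ≤ (n - du) * (n - dv) * ((k - 3) / k * n) :=
            mul_le_mul_of_nonneg_right hab (by positivity)
        _ = ((k - 3) / k) * n * (n - du) * (n - dv) := by ring
    have hsplit : (du - t) * (dv - t) * t =
        (du - t) * (dv - t) * ((1 - 3 / k) * n) + (du - t) * (dv - t) * (t - (1 - 3 / k) * n) := by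
      ring
    linarith [hQ, hfirst, hsplit]
end
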